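/- arXiv:1801.01088 — 2 statements merged into one kernel-verified Lean document; each statement's English description precedes it below -/
import Mathlib

section
/- Baillon–Haddad theorem: Let F : H → ℝ be convex and differentiable with ∇F being (1/β)-Lipschitz continuous for some β > 0. Then β∇F is firmly nonexpansive; in particular ⟨∇F(x) - ∇F(y), x - y⟩ ≥ β‖∇F(x) - ∇F(y)‖² for all x, y. -/
open scoped RealInnerProductSpace

section aux

variable {H : Type*} [NormedAddCommGroup H] [InnerProductSpace ℝ H] [CompleteSpace H]

/-- Derivative of `F` along a line, from the gradient. -/
lemma bh_hasDerivAt {F : H → ℝ} {f' : H → H}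
    (hdiff : ∀ x : H, HasGradientAt F (f' x) x) (x v : H) (t : ℝ) :
    HasDerivAt (fun s : ℝ => F (x + s • v)) ⟪f' (x + t • v), v⟫ t := by
  have hc : HasDerivAt (fun s : ℝ => x + s • v) v t := by
    simpa using ((hasDerivAt_id t).smul_const v).const_add x
  have hF := (hdiff (x + t • v)).hasFDerivAt
  have := hF.comp_hasDerivAt t hc
  simpa [InnerProductSpace.toDual_apply_apply, Function.comp_def] using this

/-- First-order characterization of convexity. -/
lemma bh_grad_ineq {F : H → ℝ} {f' : H → H}
    (hconv : ConvexOn ℝ Set.univ F)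
    (hdiff : ∀ x : H, HasGradientAt F (f' x) x) (x z : H) :
    F x + ⟪f' x, z - x⟫ ≤ F z := by
  set ψ : ℝ → ℝ := fun t => F (x + t • (z - x)) with hψdef
  have hψ : ConvexOn ℝ Set.univ ψ := by
    have h := hconv.comp_affineMap (AffineMap.lineMap x z)
    have : (F ∘ AffineMap.lineMap x z) = ψ := by
      funext t
      simp [hψdef, AffineMap.lineMap_apply, add_comm]
    rw [this] at h
    simpa using h
  have hd : HasDerivWithinAt ψ ⟪f' x, z - x⟫ (Set.Ioi (0 : ℝ)) 0 := by
    have := bh_hasDerivAt hdiff x (z - x) 0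
    simpa using this.hasDerivWithinAt
  have := hψ.le_slope_of_hasDerivWithinAt_Ioi (Set.mem_univ (0 : ℝ))
    (Set.mem_univ (1 : ℝ)) one_pos hd
  rw [slope_def_field] at this
  simp only [hψdef, zero_smul, add_zero, one_smul, add_sub_cancel] at this
  linarith

/-- Descent lemma. -/
lemma bh_descent {β : ℝ} (hβ : 0 < β) {F : H → ℝ} {f' : H → H}
    (hdiff : ∀ x : H, HasGradientAt F (f' x) x)
    (hlip : ∀ x y : H, ‖f' x - f' y‖ ≤ (1 / β) * ‖x - y‖) (x v : H) :
    F (x + v) ≤ F x + ⟪f' x, v⟫ + 1 / (2 * β) * ‖v‖ ^ 2 := by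
  set φ : ℝ → ℝ := fun t =>
    F (x + t • v) - t * ⟪f' x, v⟫ - t ^ 2 * (1 / (2 * β)) * ‖v‖ ^ 2 with hφdef
  have hφ' : ∀ t : ℝ, HasDerivAt φ
      (⟪f' (x + t • v), v⟫ - ⟪f' x, v⟫ - t * (1 / β) * ‖v‖ ^ 2) t := by
    intro t
    have h1 := bh_hasDerivAt hdiff x v t
    have h2 : HasDerivAt (fun s : ℝ => s * ⟪f' x, v⟫) ⟪f' x, v⟫ t := by
      simpa using (hasDerivAt_id t).mul_const ⟪f' x, v⟫
    have h3 : HasDerivAt (fun s : ℝ => s ^ 2 * (1 / (2 * β)) * ‖v‖ ^ 2)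
        (t * (1 / β) * ‖v‖ ^ 2) t := by
      have := ((hasDerivAt_pow 2 t).mul_const (1 / (2 * β))).mul_const (‖v‖ ^ 2)
      refine this.congr_deriv ?_
      simp only [Nat.cast_ofNat, Nat.reduceSub, pow_one]
      ring
    exact (h1.sub h2).sub h3
  have hant : AntitoneOn φ (Set.Icc (0 : ℝ) 1) := by
    apply antitoneOn_of_deriv_nonpos (convex_Icc 0 1)
    · exact fun t _ => (hφ' t).differentiableAt.continuousAt.continuousWithinAt
    · intro t _
      exact (hφ' t).differentiableAt.differentiableWithinAt
    · intro t ht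
      rw [interior_Icc] at ht
      rw [(hφ' t).deriv]
      have hin : ⟪f' (x + t • v) - f' x, v⟫ ≤ t * (1 / β) * ‖v‖ ^ 2 := by
        calc ⟪f' (x + t • v) - f' x, v⟫ ≤ ‖f' (x + t • v) - f' x‖ * ‖v‖ :=
              real_inner_le_norm _ _
          _ ≤ (1 / β) * ‖(x + t • v) - x‖ * ‖v‖ := by
              have := hlip (x + t • v) x
              have hv : (0:ℝ) ≤ ‖v‖ := norm_nonneg _
              nlinarith [norm_nonneg (f' (x + t • v) - f' x)]
          _ = t * (1 / β) * ‖v‖ ^ 2 := by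
              rw [add_sub_cancel_left, norm_smul, Real.norm_eq_abs,
                abs_of_pos ht.1]
              ring
      rw [inner_sub_left] at hin
      linarith
  have h01 := hant (Set.mem_Icc.2 ⟨le_refl 0, zero_le_one⟩)
    (Set.mem_Icc.2 ⟨zero_le_one, le_refl 1⟩) zero_le_one
  simp only [hφdef, zero_smul, add_zero, zero_mul, one_smul, one_mul, one_pow,
    sub_zero, ne_eq, zero_pow, OfNat.ofNat_ne_zero, not_false_eq_true] at h01
  linarith

end aux

/-- Baillon–Haddad: if `F` is convex differentiable with `(1/β)`-Lipschitz
gradient `f'`, then `β • f'` is firmly nonexpansive; in particular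
`⟪f' x - f' y, x - y⟫ ≥ β ‖f' x - f' y‖²`. -/
theorem stmt_5 {H : Type*} [NormedAddCommGroup H] [InnerProductSpace ℝ H]
    [CompleteSpace H] (β : ℝ) (hβ : 0 < β) (F : H → ℝ) (f' : H → H)
    (hconv : ConvexOn ℝ Set.univ F)
    (hdiff : ∀ x : H, HasGradientAt F (f' x) x)
    (hlip : ∀ x y : H, ‖f' x - f' y‖ ≤ (1 / β) * ‖x - y‖) :
    (∀ x y : H,
        ‖β • f' x - β • f' y‖ ^ 2
            + ‖(x - β • f' x) - (y - β • f' y)‖ ^ 2 ≤ ‖x - y‖ ^ 2) ∧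
      ∀ x y : H, β * ‖f' x - f' y‖ ^ 2 ≤ ⟪f' x - f' y, x - y⟫ := by
  -- one-sided estimate
  have hhalf : ∀ x y : H,
      F y + ⟪f' y, x - y⟫ + β / 2 * ‖f' x - f' y‖ ^ 2 ≤ F x := by
    intro x y
    set d := f' x - f' y with hd
    have hdesc := bh_descent hβ hdiff hlip x (-(β • d))
    have hgrad := bh_grad_ineq hconv hdiff y (x + -(β • d))
    have e1 : ⟪f' x, -(β • d)⟫ = -(β * ⟪f' x, d⟫) := by
      rw [inner_neg_right, real_inner_smul_right]
    have e2 : ⟪f' y, x + -(β • d) - y⟫ = ⟪f' y, x - y⟫ - β * ⟪f' y, d⟫ := by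
      rw [show x + -(β • d) - y = (x - y) - β • d by abel, inner_sub_right,
        real_inner_smul_right]
    have e3 : ‖-(β • d)‖ ^ 2 = β ^ 2 * ‖d‖ ^ 2 := by
      rw [norm_neg, norm_smul, Real.norm_eq_abs, abs_of_pos hβ, mul_pow]
    have e4 : ⟪f' x, d⟫ - ⟪f' y, d⟫ = ‖d‖ ^ 2 := by
      rw [← inner_sub_left, ← hd, real_inner_self_eq_norm_sq]
    have hβ' : β ≠ 0 := ne_of_gt hβ
    have h2β : 1 / (2 * β) * (β ^ 2 * ‖d‖ ^ 2) = β / 2 * ‖d‖ ^ 2 := by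
      field_simp
    rw [e1, e3] at hdesc
    rw [e2] at hgrad
    nlinarith [hdesc, hgrad]
  have key : ∀ x y : H, β * ‖f' x - f' y‖ ^ 2 ≤ ⟪f' x - f' y, x - y⟫ := by
    intro x y
    have h1 := hhalf x y
    have h2 := hhalf y x
    have e1 : ⟪f' y - f' x, y - x⟫ = ⟪f' x - f' y, x - y⟫ := by
      rw [show f' y - f' x = -(f' x - f' y) by abel,
        show y - x = -(x - y) by abel, inner_neg_neg]
    have e2 : ‖f' y - f' x‖ = ‖f' x - f' y‖ := norm_sub_rev _ _
    have e3 : ⟪f' y, x - y⟫ + ⟪f' x, y - x⟫ = -⟪f' x - f' y, x - y⟫ := by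
      rw [show y - x = -(x - y) by abel, inner_neg_right, inner_sub_left]
      ring
    rw [e2] at h2
    nlinarith [h1, h2]
  refine ⟨fun x y => ?_, key⟩
  have hk := key x y
  have e1 : β • f' x - β • f' y = β • (f' x - f' y) := by
    rw [smul_sub]
  have e2 : (x - β • f' x) - (y - β • f' y) = (x - y) - β • (f' x - f' y) := by
    rw [smul_sub]; abel
  have hn1 : ‖β • (f' x - f' y)‖ ^ 2 = β ^ 2 * ‖f' x - f' y‖ ^ 2 := by
    rw [norm_smul, Real.norm_eq_abs, abs_of_pos hβ, mul_pow]
  have hn2 : ‖(x - y) - β • (f' x - f' y)‖ ^ 2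
      = ‖x - y‖ ^ 2 - 2 * (β * ⟪x - y, f' x - f' y⟫) + β ^ 2 * ‖f' x - f' y‖ ^ 2 := by
    rw [norm_sub_sq_real, real_inner_smul_right, hn1]
  have hc : ⟪f' x - f' y, x - y⟫ = ⟪x - y, f' x - f' y⟫ := real_inner_comm _ _
  rw [e1, e2, hn1, hn2]
  rw [hc] at hk
  nlinarith [hk, sq_nonneg ‖f' x - f' y‖]
end

section
/- o(1/k) rate of Forward–Backward objective: Under the assumptions of the non-relaxed non-stationary Forward–Backward iteration x_{k+1} = prox_{γₖR}(x_k - γₖ∇F(x_k)) with 0 < γ ≤ γₖ ≤ γ̄ < 2β, γₖ → γ, ∑|γₖ - γ| < ∞, and with Argmin(F+R) ≠ ∅, the objective error satisfies Φ(x_k) - Φ(x⋆) = o(1/(k+1)), where Φ = F + R and x⋆ is a minimizer. -/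
open Filter Topology RealInnerProductSpace intervalIntegral

lemma line_deriv {H : Type*} [NormedAddCommGroup H] [InnerProductSpace ℝ H] [CompleteSpace H]
    (F : H → ℝ) (f' : H → H) (hdiff : ∀ x : H, HasGradientAt F (f' x) x)
    (x v : H) (t₀ : ℝ) :
    HasDerivAt (fun t : ℝ => F (x + t • v)) ⟪f' (x + t₀ • v), v⟫ t₀ := by
  have hline : HasDerivAt (fun t : ℝ => x + t • v) v t₀ := by
    simpa using ((hasDerivAt_id t₀).smul_const v).const_add x
  have := ((hdiff (x + t₀ • v)).hasFDerivAt.comp_hasDerivAt t₀ hline)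
  simpa [InnerProductSpace.toDual_apply_apply, Function.comp_def] using this

lemma grad_ineq {H : Type*} [NormedAddCommGroup H] [InnerProductSpace ℝ H] [CompleteSpace H]
    (F : H → ℝ) (f' : H → H) (hFconv : ConvexOn ℝ Set.univ F)
    (hdiff : ∀ x : H, HasGradientAt F (f' x) x) (x u : H) :
    F x + ⟪f' x, u - x⟫ ≤ F u := by
  set v := u - x with hv
  set g : ℝ → ℝ := fun t => F (x + t • v) with hg
  have hd : HasDerivAt g ⟪f' x, v⟫ 0 := by
    have := line_deriv F f' hdiff x v 0
    simpa using this
  have hslope : Tendsto (slope g 0) (𝓝[>] 0) (𝓝 ⟪f' x, v⟫) :=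
    (hasDerivAt_iff_tendsto_slope.mp hd).mono_left
      (nhdsWithin_mono 0 (by intro t ht; exact ne_of_gt ht))
  have hbound : ∀ᶠ t in 𝓝[>] (0:ℝ), slope g 0 t ≤ F u - F x := by
    filter_upwards [Ioc_mem_nhdsGT_of_mem (by norm_num : (0:ℝ) ∈ Set.Ico 0 1)] with t ht
    have h01 : (0:ℝ) ≤ 1 - t := by linarith [ht.2]
    have hconv := hFconv.2 (Set.mem_univ x) (Set.mem_univ u) h01 (le_of_lt ht.1) (by ring)
    have hxt : (1 - t) • x + t • u = x + t • v := by
      simp only [hv]; module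
    rw [hxt] at hconv
    have : g t ≤ (1 - t) * F x + t * F u := by simpa [hg] using hconv
    have hg0 : g 0 = F x := by simp [hg]
    rw [slope_def_field, hg0, sub_zero, div_le_iff₀ ht.1]
    nlinarith [ht.1]
  have := le_of_tendsto hslope hbound
  have hg1 : g 1 = F u := by simp [hg, hv]
  linarith

lemma descent_lemma {H : Type*} [NormedAddCommGroup H] [InnerProductSpace ℝ H] [CompleteSpace H]
    (β : ℝ) (hβ : 0 < β) (F : H → ℝ) (f' : H → H)
    (hdiff : ∀ x : H, HasGradientAt F (f' x) x)
    (hlip : ∀ x y : H, ‖f' x - f' y‖ ≤ (1 / β) * ‖x - y‖) (x p : H) :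
    F p ≤ F x + ⟪f' x, p - x⟫ + 1 / (2 * β) * ‖p - x‖ ^ 2 := by
  set v := p - x with hv
  have hf'cont : Continuous f' := by
    apply LipschitzWith.continuous (K := Real.toNNReal (1 / β))
    apply LipschitzWith.of_dist_le_mul
    intro a b
    rw [dist_eq_norm, dist_eq_norm]
    have hmax : ((1/β : ℝ).toNNReal : ℝ) = 1/β :=
      Real.coe_toNNReal _ (by positivity)
    rw [hmax]
    exact hlip a b
  set h : ℝ → ℝ := fun t => ⟪f' (x + t • v), v⟫ with hh
  have hcont : Continuous h := by
    apply Continuous.inner (by fun_prop) continuous_const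
  have hftc : ∫ t in (0:ℝ)..1, h t = F (x + (1:ℝ) • v) - F (x + (0:ℝ) • v) := by
    apply intervalIntegral.integral_eq_sub_of_hasDerivAt (f := fun t : ℝ => F (x + t • v))
    · intro t _
      exact line_deriv F f' hdiff x v t
    · exact hcont.intervalIntegrable 0 1
  have hid : IntervalIntegrable (fun t : ℝ => t) MeasureTheory.volume 0 1 :=
    continuous_id.intervalIntegrable 0 1
  have hint2 : ∫ t in (0:ℝ)..1, (⟪f' x, v⟫ + (1/β) * ‖v‖^2 * t) =
      ⟪f' x, v⟫ + 1/(2*β) * ‖v‖^2 := by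
    rw [intervalIntegral.integral_add intervalIntegrable_const (hid.const_mul _),
      intervalIntegral.integral_const_mul, integral_id]
    simp
    ring
  have hmono : ∫ t in (0:ℝ)..1, h t ≤ ∫ t in (0:ℝ)..1, (⟪f' x, v⟫ + (1/β) * ‖v‖^2 * t) := by
    apply intervalIntegral.integral_mono_on (by norm_num)
      (hcont.intervalIntegrable 0 1)
      (intervalIntegrable_const.add (hid.const_mul _))
    intro t ht
    have h1 : h t - ⟪f' x, v⟫ = ⟪f' (x + t • v) - f' x, v⟫ := by
      rw [inner_sub_left]
    have h2 : ⟪f' (x + t • v) - f' x, v⟫ ≤ ‖f' (x + t • v) - f' x‖ * ‖v‖ :=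
      real_inner_le_norm _ _
    have h3 : ‖f' (x + t • v) - f' x‖ ≤ (1/β) * ‖t • v‖ := by
      simpa using hlip (x + t • v) x
    have h4 : ‖t • v‖ = t * ‖v‖ := by
      rw [norm_smul, Real.norm_eq_abs, abs_of_nonneg ht.1]
    have h5 : ‖f' (x + t • v) - f' x‖ * ‖v‖ ≤ (1/β) * (t * ‖v‖) * ‖v‖ := by
      rw [h4] at h3
      exact mul_le_mul_of_nonneg_right h3 (norm_nonneg v)
    have h6 : (1/β) * (t * ‖v‖) * ‖v‖ = 1/β * ‖v‖^2 * t := by ring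
    linarith
  rw [hftc, hint2] at hmono
  simp only [one_smul, zero_smul, add_zero] at hmono
  have : x + v = p := by simp [hv]
  rw [this] at hmono
  linarith

lemma nonneg_of_Ioc (c d : ℝ) (h : ∀ t ∈ Set.Ioc (0:ℝ) 1, 0 ≤ c + t * d) : 0 ≤ c := by
  have htend : Tendsto (fun t : ℝ => c + t * d) (𝓝[>] 0) (𝓝 c) := by
    have : Tendsto (fun t : ℝ => c + t * d) (𝓝 0) (𝓝 (c + 0 * d)) :=
      (continuous_const.add (continuous_id.mul continuous_const)).tendsto 0
    simpa using this.mono_left nhdsWithin_le_nhds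
  refine ge_of_tendsto htend ?_
  filter_upwards [Ioc_mem_nhdsGT_of_mem (by norm_num : (0:ℝ) ∈ Set.Ico 0 1)] with t ht
  exact h t ht

def IsProx {H : Type*} [NormedAddCommGroup H] [InnerProductSpace ℝ H]
    (R : H → ℝ) (γ : ℝ) (y p : H) : Prop :=
  IsMinOn (fun u : H => γ * R u + (1 / 2) * ‖u - y‖ ^ 2) Set.univ p

lemma prox_ineq {H : Type*} [NormedAddCommGroup H] [InnerProductSpace ℝ H]
    (R : H → ℝ) (hRconv : ConvexOn ℝ Set.univ R) (γ : ℝ) (hγ : 0 ≤ γ)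
    (y p : H) (hp : IsProx R γ y p) (u : H) :
    γ * R p ≤ γ * R u + ⟪p - y, u - p⟫ := by
  have key : 0 ≤ (γ * R u - γ * R p + ⟪p - y, u - p⟫) + 0 * 0 → True := fun _ => trivial
  have main : 0 ≤ γ * R u - γ * R p + ⟪p - y, u - p⟫ := by
    apply nonneg_of_Ioc _ ((1:ℝ)/2 * ‖u - p‖^2)
    intro t ht
    have hq := hp (Set.mem_univ (p + t • (u - p)))
    simp only [Set.mem_setOf_eq] at hq
    have hR : R (p + t • (u - p)) ≤ (1 - t) * R p + t * R u := by
      have := hRconv.2 (Set.mem_univ p) (Set.mem_univ u) (by linarith [ht.2] : (0:ℝ) ≤ 1 - t)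
        (le_of_lt ht.1) (by ring)
      have heq : (1 - t) • p + t • u = p + t • (u - p) := by module
      rw [heq] at this
      simpa using this
    have hnorm : ‖p + t • (u - p) - y‖^2 =
        ‖p - y‖^2 + 2 * t * ⟪p - y, u - p⟫ + t^2 * ‖u - p‖^2 := by
      have heq : p + t • (u - p) - y = (p - y) + t • (u - p) := by abel
      rw [heq, norm_add_sq_real, real_inner_smul_right, norm_smul, Real.norm_eq_abs]
      rw [mul_pow, sq_abs]
      ring
    have hγR : γ * R (p + t • (u - p)) ≤ γ * ((1 - t) * R p + t * R u) :=
      mul_le_mul_of_nonneg_left hR hγ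
    -- minimality: γ R p + ½‖p-y‖² ≤ γ R q + ½‖q-y‖²
    have hmin' : γ * R p + 1/2 * ‖p - y‖^2 ≤
        γ * R (p + t • (u - p)) + 1/2 * ‖p + t • (u - p) - y‖^2 := hq
    rw [hnorm] at hmin'
    have hcomb : 0 ≤ t * (γ * R u - γ * R p + ⟪p - y, u - p⟫) + t^2 * (1/2 * ‖u - p‖^2) := by
      nlinarith [hmin', hγR]
    have ht' : 0 < t := ht.1
    nlinarith [hcomb, ht']
  linarith

lemma fb_step {H : Type*} [NormedAddCommGroup H] [InnerProductSpace ℝ H] [CompleteSpace H]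
    (β : ℝ) (hβ : 0 < β) (F : H → ℝ) (f' : H → H)
    (hFconv : ConvexOn ℝ Set.univ F)
    (hdiff : ∀ x : H, HasGradientAt F (f' x) x)
    (hlip : ∀ x y : H, ‖f' x - f' y‖ ≤ (1 / β) * ‖x - y‖)
    (R : H → ℝ) (hRconv : ConvexOn ℝ Set.univ R)
    (γk : ℝ) (hγpos : 0 < γk) (xk p : H)
    (hp : IsProx R γk (xk - γk • f' xk) p) (u : H) :
    γk * ((F p + R p) - (F u + R u)) ≤
      1/2 * ‖u - xk‖^2 - 1/2 * ‖u - p‖^2 + (γk/(2*β) - 1/2) * ‖p - xk‖^2 := by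
  have hA := descent_lemma β hβ F f' hdiff hlip xk p
  have hB := grad_ineq F f' hFconv hdiff xk u
  have hC := prox_ineq R hRconv γk (le_of_lt hγpos) (xk - γk • f' xk) p hp u
  have hCexp : ⟪p - (xk - γk • f' xk), u - p⟫ =
      ⟪p - xk, u - p⟫ + γk * ⟪f' xk, u - p⟫ := by
    have : p - (xk - γk • f' xk) = (p - xk) + γk • f' xk := by abel
    rw [this, inner_add_left, real_inner_smul_left]
  have hD : ⟪p - xk, u - p⟫ =
      1/2 * ‖u - xk‖^2 - 1/2 * ‖u - p‖^2 - 1/2 * ‖p - xk‖^2 := by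
    have heq : u - xk = (u - p) + (p - xk) := by abel
    have := norm_add_sq_real (u - p) (p - xk)
    rw [← heq] at this
    rw [real_inner_comm]
    linarith
  have hE : ⟪f' xk, p - xk⟫ + ⟪f' xk, u - p⟫ = ⟪f' xk, u - xk⟫ := by
    rw [← inner_add_right]
    congr 1
    abel
  have hAγ : γk * F p ≤ γk * (F xk + ⟪f' xk, p - xk⟫ + 1/(2*β) * ‖p - xk‖^2) :=
    mul_le_mul_of_nonneg_left hA (le_of_lt hγpos)
  have hBγ : γk * (F xk + ⟪f' xk, u - xk⟫) ≤ γk * F u :=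
    mul_le_mul_of_nonneg_left hB (le_of_lt hγpos)
  rw [hCexp] at hC
  have e1 : γk * (F xk + ⟪f' xk, p - xk⟫ + 1/(2*β) * ‖p - xk‖^2) =
      γk * F xk + γk * ⟪f' xk, p - xk⟫ + γk/(2*β) * ‖p - xk‖^2 := by ring
  rw [e1] at hAγ
  have e2 : γk * (F xk + ⟪f' xk, u - xk⟫) = γk * F xk + γk * ⟪f' xk, u - xk⟫ := by ring
  rw [e2] at hBγ
  have e3 : γk * ((F p + R p) - (F u + R u)) =
      γk * F p + γk * R p - γk * F u - γk * R u := by ring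
  rw [e3]
  have e4 : (γk/(2*β) - 1/2) * ‖p - xk‖^2 =
      γk/(2*β) * ‖p - xk‖^2 - 1/2 * ‖p - xk‖^2 := by ring
  rw [e4]
  have hEγ : γk * ⟪f' xk, p - xk⟫ + γk * ⟪f' xk, u - p⟫ = γk * ⟪f' xk, u - xk⟫ := by
    linear_combination γk * hE
  linarith [hAγ, hBγ, hC, hD, hEγ]

lemma antitone_summable_o (a : ℕ → ℝ) (hnn : ∀ k, 0 ≤ a k)
    (hmono : ∀ k, a (k + 1) ≤ a k) (hsum : Summable a) :
    Tendsto (fun k : ℕ => ((k : ℝ) + 1) * a k) atTop (𝓝 0) := by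
  have hant : Antitone a := antitone_nat_of_succ_le hmono
  rw [Metric.tendsto_atTop]
  intro ε hε
  have htail : Tendsto (fun n => ∑' i, a (i + n)) atTop (𝓝 0) :=
    _root_.tendsto_sum_nat_add a
  rw [Metric.tendsto_atTop] at htail
  obtain ⟨N, hN⟩ := htail (ε/2) (by positivity)
  have hTlt : ∑' i, a (i + N) < ε/2 := by
    have := hN N le_rfl
    rw [Real.dist_eq, sub_zero] at this
    calc ∑' i, a (i + N) ≤ |∑' i, a (i + N)| := le_abs_self _
    _ < ε/2 := this
  have hsum' : Summable (fun i => a (i + N)) := (summable_nat_add_iff N).mpr hsum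
  refine ⟨2*N + 1, fun k hk => ?_⟩
  have hkN : N ≤ k := by omega
  set m := k - N with hm
  have hmk : m + N = k := by omega
  have hsum_ge : (m : ℝ) * a k ≤ ∑ i ∈ Finset.range m, a (i + N) := by
    have := Finset.card_nsmul_le_sum (Finset.range m) (fun i => a (i + N)) (a k)
      (fun i hi => hant (by simp at hi; omega))
    simpa [nsmul_eq_mul] using this
  have hsum_le : ∑ i ∈ Finset.range m, a (i + N) ≤ ∑' i, a (i + N) :=
    hsum'.sum_le_tsum (Finset.range m) (fun i _ => hnn _)
  have hma : (m : ℝ) * a k < ε/2 := lt_of_le_of_lt (hsum_ge.trans hsum_le) hTlt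
  have hk1 : (k : ℝ) + 1 ≤ 2 * m := by
    have : k + 1 ≤ 2 * m := by omega
    calc (k : ℝ) + 1 = ((k + 1 : ℕ) : ℝ) := by push_cast; ring
    _ ≤ ((2 * m : ℕ) : ℝ) := by exact_mod_cast this
    _ = 2 * m := by push_cast; ring
  rw [Real.dist_eq, sub_zero, abs_of_nonneg (mul_nonneg (by positivity) (hnn k))]
  calc ((k : ℝ) + 1) * a k ≤ 2 * m * a k := mul_le_mul_of_nonneg_right hk1 (hnn k)
  _ = 2 * ((m:ℝ) * a k) := by ring
  _ < 2 * (ε/2) := by linarith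
  _ = ε := by ring

/-- `o(1/k)` rate of the Forward–Backward objective: for the non-relaxed,
non-stationary iteration `x_{k+1} = prox_{γₖR}(x_k - γₖ ∇F(x_k))` with
`0 < γlow ≤ γₖ ≤ γup < 2β`, `γₖ → γ∞`, `∑ |γₖ - γ∞| < ∞` and a minimizer
`xstar` of `Φ = F + R`, one has `(k+1)(Φ(x_k) - Φ(xstar)) → 0`. -/
theorem stmt_16 {H : Type*} [NormedAddCommGroup H] [InnerProductSpace ℝ H]
    [CompleteSpace H] (β : ℝ) (hβ : 0 < β)
    (F : H → ℝ) (f' : H → H)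
    (hFconv : ConvexOn ℝ Set.univ F)
    (hdiff : ∀ x : H, HasGradientAt F (f' x) x)
    (hlip : ∀ x y : H, ‖f' x - f' y‖ ≤ (1 / β) * ‖x - y‖)
    (R : H → ℝ) (hRconv : ConvexOn ℝ Set.univ R)
    (hRlsc : LowerSemicontinuous R)
    (γ : ℕ → ℝ) (γlow γup γinf : ℝ)
    (hlow : 0 < γlow) (hup : γup < 2 * β)
    (hγ : ∀ k, γlow ≤ γ k ∧ γ k ≤ γup)
    (hγlim : Tendsto γ atTop (𝓝 γinf))
    (hγsum : Summable (fun k => |γ k - γinf|))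
    (xstar : H) (hmin : IsMinOn (fun x : H => F x + R x) Set.univ xstar)
    (x : ℕ → H)
    (hx : ∀ k : ℕ, IsProx R (γ k) (x k - γ k • f' (x k)) (x (k + 1))) :
    Tendsto
      (fun k : ℕ => ((k : ℝ) + 1) * ((F (x k) + R (x k)) - (F xstar + R xstar)))
      atTop (𝓝 0) := by
  obtain ⟨a, ha⟩ : ∃ a : ℕ → ℝ, ∀ k, a k = (F (x k) + R (x k)) - (F xstar + R xstar) :=
    ⟨_, fun k => rfl⟩
  obtain ⟨b, hb⟩ : ∃ b : ℕ → ℝ, ∀ k, b k = ‖xstar - x k‖^2 := ⟨_, fun k => rfl⟩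
  obtain ⟨Δ, hΔdef⟩ : ∃ Δ : ℕ → ℝ, ∀ k, Δ k = ‖x (k+1) - x k‖^2 := ⟨_, fun k => rfl⟩
  have hgoal : (fun k : ℕ => ((k : ℝ) + 1) * ((F (x k) + R (x k)) - (F xstar + R xstar)))
      = fun k : ℕ => ((k : ℝ) + 1) * a k := by
    funext k; rw [ha k]
  rw [hgoal]
  have h2β : (0:ℝ) < 2 * β := by linarith
  have hγpos : ∀ k, 0 < γ k := fun k => lt_of_lt_of_le hlow (hγ k).1
  have hγupos : 0 < γup := lt_of_lt_of_le (hγpos 0) (hγ 0).2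
  have key : ∀ k (u : H), γ k * ((F (x (k+1)) + R (x (k+1))) - (F u + R u)) ≤
      1/2 * ‖u - x k‖^2 - 1/2 * ‖u - x (k+1)‖^2 + (γ k/(2*β) - 1/2) * ‖x (k+1) - x k‖^2 :=
    fun k u => fb_step β hβ F f' hFconv hdiff hlip R hRconv (γ k) (hγpos k)
      (x k) (x (k+1)) (hx k) u
  have hΔnn : ∀ k, 0 ≤ Δ k := fun k => by rw [hΔdef]; positivity
  have ha_nn : ∀ k, 0 ≤ a k := fun k => by
    have := hmin (Set.mem_univ (x k)); simp only [Set.mem_setOf_eq] at this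
    rw [ha]; linarith [this]
  -- key specialized to u = x k, rewritten in terms of a and Δ
  have keyx : ∀ k, γ k * (a (k+1) - a k) ≤ (γ k/(2*β) - 1) * Δ k := by
    intro k
    have hk := key k (x k)
    simp only [sub_self, norm_zero] at hk
    have hnorm : ‖x k - x (k+1)‖^2 = ‖x (k+1) - x k‖^2 := by rw [norm_sub_rev]
    rw [hnorm, ← hΔdef k] at hk
    have e : γ k * ((F (x (k+1)) + R (x (k+1))) - (F (x k) + R (x k))) =
        γ k * (a (k+1) - a k) := by rw [ha, ha]; ring
    rw [e] at hk
    calc γ k * (a (k+1) - a k) ≤ 1/2 * 0^2 - 1/2 * Δ k + (γ k/(2*β) - 1/2) * Δ k := by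
          simpa using hk
      _ = (γ k/(2*β) - 1) * Δ k := by ring
  have hdec : ∀ k, a (k+1) ≤ a k := by
    intro k
    have hk := keyx k
    have hcoef : (γ k/(2*β) - 1) * Δ k ≤ 0 := by
      apply mul_nonpos_of_nonpos_of_nonneg _ (hΔnn k)
      have hlt : γ k < 2 * β := lt_of_le_of_lt (hγ k).2 hup
      have : γ k / (2*β) < 1 := (div_lt_one h2β).mpr hlt
      linarith
    nlinarith [hγpos k, hk, hcoef]
  set δ : ℝ := 1 - γup/(2*β) with hδ
  have hδpos : 0 < δ := by
    have : γup / (2*β) < 1 := (div_lt_one h2β).mpr hup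
    rw [hδ]; linarith
  have hΔbound : ∀ k, δ * Δ k ≤ γup * (a k - a (k+1)) := by
    intro k
    have hk := keyx k
    have h1 : (1 - γ k/(2*β)) * Δ k ≤ γ k * (a k - a (k+1)) := by nlinarith [hk]
    have h2 : δ * Δ k ≤ (1 - γ k/(2*β)) * Δ k := by
      apply mul_le_mul_of_nonneg_right _ (hΔnn k)
      have hdd : γ k / (2*β) ≤ γup / (2*β) := by gcongr <;> linarith [(hγ k).2]
      rw [hδ]; linarith
    have h3 : γ k * (a k - a (k+1)) ≤ γup * (a k - a (k+1)) :=
      mul_le_mul_of_nonneg_right (hγ k).2 (by linarith [hdec k])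
    exact h2.trans (h1.trans h3)
  clear_value δ
  have hΔsum : ∀ n, ∑ k ∈ Finset.range n, Δ k ≤ γup/δ * a 0 := by
    intro n
    have htel : ∑ k ∈ Finset.range n, (a k - a (k+1)) = a 0 - a n :=
      Finset.sum_range_sub' a n
    have h1 : ∑ k ∈ Finset.range n, δ * Δ k ≤ ∑ k ∈ Finset.range n, γup * (a k - a (k+1)) :=
      Finset.sum_le_sum (fun k _ => hΔbound k)
    rw [← Finset.mul_sum, ← Finset.mul_sum, htel] at h1
    have h2 : γup * (a 0 - a n) ≤ γup * a 0 :=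
      mul_le_mul_of_nonneg_left (by linarith [ha_nn n]) (le_of_lt hγupos)
    rw [div_mul_eq_mul_div, le_div_iff₀ hδpos]
    linarith
  have hstar : ∀ k, γlow * a (k+1) ≤ 1/2 * (b k - b (k+1)) + γup/(2*β) * Δ k := by
    intro k
    have hk := key k xstar
    have e : (F (x (k+1)) + R (x (k+1))) - (F xstar + R xstar) = a (k+1) := (ha (k+1)).symm
    rw [e, ← hb k, ← hb (k+1), ← hΔdef k] at hk
    have h1 : γlow * a (k+1) ≤ γ k * a (k+1) :=
      mul_le_mul_of_nonneg_right (hγ k).1 (ha_nn (k+1))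
    have h2 : (γ k/(2*β) - 1/2) * Δ k ≤ γup/(2*β) * Δ k := by
      apply mul_le_mul_of_nonneg_right _ (hΔnn k)
      have hdd : γ k / (2*β) ≤ γup / (2*β) := by gcongr <;> linarith [(hγ k).2]
      linarith
    linarith
  have hC : ∀ n, ∑ k ∈ Finset.range n, a (k+1) ≤
      (1/2 * b 0 + γup/(2*β) * (γup/δ * a 0)) / γlow := by
    intro n
    rw [le_div_iff₀ hlow]
    have h1 : ∑ k ∈ Finset.range n, γlow * a (k+1) ≤
        ∑ k ∈ Finset.range n, (1/2 * (b k - b (k+1)) + γup/(2*β) * Δ k) :=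
      Finset.sum_le_sum (fun k _ => hstar k)
    rw [Finset.sum_add_distrib, ← Finset.mul_sum, ← Finset.mul_sum, ← Finset.mul_sum,
      Finset.sum_range_sub' b n] at h1
    have hbn : 0 ≤ b n := by rw [hb]; positivity
    have h2 : γup/(2*β) * ∑ k ∈ Finset.range n, Δ k ≤ γup/(2*β) * (γup/δ * a 0) :=
      mul_le_mul_of_nonneg_left (hΔsum n) (by positivity)
    calc (∑ k ∈ Finset.range n, a (k+1)) * γlow
        = γlow * ∑ k ∈ Finset.range n, a (k+1) := by ring
      _ ≤ 1/2 * (b 0 - b n) + γup/(2*β) * (γup/δ * a 0) := by linarith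
      _ ≤ 1/2 * b 0 + γup/(2*β) * (γup/δ * a 0) := by linarith
  have hsumshift : Summable (fun k => a (k+1)) :=
    summable_of_sum_range_le (fun k => ha_nn (k+1)) hC
  have hsuma : Summable a := (summable_nat_add_iff 1).mp (by simpa using hsumshift)
  exact antitone_summable_o a ha_nn hdec hsuma
end
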